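/- arXiv:math/9810072 — 2 statements merged into one kernel-verified Lean document; each statement's English description precedes it below -/
import Mathlib

section
/- A topological space (X, 𝒯^α) is s-closed if and only if (X, 𝒯) is s-closed. -/
open Set TopologicalSpace

universe u v

variable {X : Type u} {Y : Type v}

/-- A set is an α-set (α-open) w.r.t. the topology `T` if `A ⊆ Int (Cl (Int A))`. -/
def AlphaOpen (T : TopologicalSpace X) (A : Set X) : Prop :=
  letI := T
  A ⊆ interior (closure (interior A))

/-- The α-topology `𝒯^α`, whose open sets are exactly the α-sets of `T`. -/
def alphaTop (T : TopologicalSpace X) : TopologicalSpace X :=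
  letI := T
  { IsOpen := fun A => A ⊆ interior (closure (interior A))
    isOpen_univ := by simp
    isOpen_inter := by
      intro A B hA hB
      have hsub : interior (closure (interior A)) ∩ interior (closure (interior B)) ⊆
          closure (interior (A ∩ B)) := by
        intro x hx
        have h1 : interior (closure (interior B)) ∩ closure (interior A) ⊆
            closure (interior (closure (interior B)) ∩ interior A) :=
          isOpen_interior.inter_closure
        have h2 : interior (closure (interior B)) ∩ interior A ⊆
            closure (interior A ∩ interior B) := by
          intro y hy
          have h : interior A ∩ closure (interior B) ⊆ closure (interior A ∩ interior B) :=
            isOpen_interior.inter_closure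
          exact h ⟨hy.2, interior_subset hy.1⟩
        have h3 : closure (interior (closure (interior B)) ∩ interior A) ⊆
            closure (interior A ∩ interior B) := by
          calc closure (interior (closure (interior B)) ∩ interior A)
              ⊆ closure (closure (interior A ∩ interior B)) := closure_mono h2
            _ = closure (interior A ∩ interior B) := closure_closure
        have hx' : x ∈ closure (interior A ∩ interior B) :=
          h3 (h1 ⟨hx.2, interior_subset hx.1⟩)
        rwa [← interior_inter] at hx'
      intro x hx
      exact interior_maximal hsub (isOpen_interior.inter isOpen_interior) ⟨hA hx.1, hB hx.2⟩
    isOpen_sUnion := by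
      intro S hS x hx
      obtain ⟨t, htS, hxt⟩ := hx
      have h : interior (closure (interior t)) ⊆ interior (closure (interior (⋃₀ S))) :=
        interior_mono (closure_mono (interior_mono (subset_sUnion_of_mem htS)))
      exact h (hS t htS hxt) }

/-- `A` is semi-open w.r.t. `T` if `A ⊆ Cl (Int A)`. -/
def SemiOpen (T : TopologicalSpace X) (A : Set X) : Prop :=
  letI := T
  A ⊆ closure (interior A)

/-- `A` is semi-closed if its complement is semi-open. -/
def SemiClosed (T : TopologicalSpace X) (A : Set X) : Prop :=
  SemiOpen T Aᶜ

/-- The semi-closure of `A`: the intersection of all semi-closed sets containing `A`. -/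
def sCl (T : TopologicalSpace X) (A : Set X) : Set X :=
  ⋂₀ {C | SemiClosed T C ∧ A ⊆ C}

/-- `A` is sg-closed if `sCl A ⊆ U` whenever `A ⊆ U` with `U` semi-open. -/
def SgClosed (T : TopologicalSpace X) (A : Set X) : Prop :=
  ∀ U : Set X, SemiOpen T U → A ⊆ U → sCl T A ⊆ U

/-- `A` is sg-open if its complement is sg-closed. -/
def SgOpen (T : TopologicalSpace X) (A : Set X) : Prop :=
  SgClosed T Aᶜ

/-- `A` is regular closed w.r.t. `T` if `A = Cl (Int A)`. -/
def RegClosed (T : TopologicalSpace X) (A : Set X) : Prop :=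
  letI := T
  A = closure (interior A)

/-- A family `𝒱` refines a family `𝒰` if every member of `𝒱` is contained in a member of `𝒰`. -/
def Refines (𝒱 𝒰 : Set (Set X)) : Prop :=
  ∀ V ∈ 𝒱, ∃ U ∈ 𝒰, V ⊆ U

/-- A family of sets is locally finite if every point has a neighbourhood
meeting only finitely many members. -/
def LocFinite (T : TopologicalSpace X) (𝒱 : Set (Set X)) : Prop :=
  ∀ x : X, ∃ N ∈ @nhds X T x, {V ∈ 𝒱 | (V ∩ N).Nonempty}.Finite

/-- A family of sets is locally countable if every point has a neighbourhood
meeting only countably many members. -/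
def LocCountable (T : TopologicalSpace X) (𝒱 : Set (Set X)) : Prop :=
  ∀ x : X, ∃ N ∈ @nhds X T x, {V ∈ 𝒱 | (V ∩ N).Nonempty}.Countable

/-- A family of sets is discrete if every point has a neighbourhood
meeting at most one member. -/
def DiscreteFam (T : TopologicalSpace X) (𝒱 : Set (Set X)) : Prop :=
  ∀ x : X, ∃ N ∈ @nhds X T x, {V ∈ 𝒱 | (V ∩ N).Nonempty}.Subsingleton

/-- A family is σ-discrete if it is a countable union of discrete families. -/
def SigmaDiscrete (T : TopologicalSpace X) (𝒱 : Set (Set X)) : Prop :=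
  ∃ 𝒲 : ℕ → Set (Set X), 𝒱 = ⋃ n, 𝒲 n ∧ ∀ n, DiscreteFam T (𝒲 n)

/-- A family is closure-preserving if for every subfamily the closure of the
union is the union of the closures. -/
def ClosurePreserving (T : TopologicalSpace X) (𝒲 : Set (Set X)) : Prop :=
  letI := T
  ∀ 𝒲' ⊆ 𝒲, closure (⋃₀ 𝒲') = ⋃ W ∈ 𝒲', closure W

/-- A family is σ-closure-preserving if it is a countable union of
closure-preserving families. -/
def SigmaClosurePreserving (T : TopologicalSpace X) (𝒱 : Set (Set X)) : Prop :=
  ∃ 𝒲 : ℕ → Set (Set X), 𝒱 = ⋃ n, 𝒲 n ∧ ∀ n, ClosurePreserving T (𝒲 n)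

/-- Semi-compact: every semi-open cover has a finite subcover. -/
def SemiCompact (T : TopologicalSpace X) : Prop :=
  ∀ 𝒰 : Set (Set X), (∀ U ∈ 𝒰, SemiOpen T U) → ⋃₀ 𝒰 = univ →
    ∃ 𝒱 ⊆ 𝒰, 𝒱.Finite ∧ ⋃₀ 𝒱 = univ

/-- S-closed: for every semi-open cover there is a finite subfamily
whose closures cover. -/
def SClosed (T : TopologicalSpace X) : Prop :=
  letI := T
  ∀ 𝒰 : Set (Set X), (∀ U ∈ 𝒰, SemiOpen T U) → ⋃₀ 𝒰 = univ →
    ∃ 𝒱 ⊆ 𝒰, 𝒱.Finite ∧ (⋃ V ∈ 𝒱, closure V) = univ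

/-- s-closed: for every semi-open cover there is a finite subfamily
whose semi-closures cover. -/
def SmallSClosed (T : TopologicalSpace X) : Prop :=
  ∀ 𝒰 : Set (Set X), (∀ U ∈ 𝒰, SemiOpen T U) → ⋃₀ 𝒰 = univ →
    ∃ 𝒱 ⊆ 𝒰, 𝒱.Finite ∧ (⋃ V ∈ 𝒱, sCl T V) = univ

/-- rc-Lindelöf: every regular closed cover has a countable subcover. -/
def RcLindelof (T : TopologicalSpace X) : Prop :=
  ∀ 𝒰 : Set (Set X), (∀ U ∈ 𝒰, RegClosed T U) → ⋃₀ 𝒰 = univ →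
    ∃ 𝒱 ⊆ 𝒰, 𝒱.Countable ∧ ⋃₀ 𝒱 = univ

/-- sg-compact: every sg-open cover has a finite subcover. -/
def SgCompact (T : TopologicalSpace X) : Prop :=
  ∀ 𝒰 : Set (Set X), (∀ U ∈ 𝒰, SgOpen T U) → ⋃₀ 𝒰 = univ →
    ∃ 𝒱 ⊆ 𝒰, 𝒱.Finite ∧ ⋃₀ 𝒱 = univ

/-- `A` is S-closed relative to `X`: every cover of `A` by semi-open sets of `X`
has a finite subfamily whose closures cover `A`. -/
def SClosedRel (T : TopologicalSpace X) (A : Set X) : Prop :=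
  letI := T
  ∀ 𝒰 : Set (Set X), (∀ U ∈ 𝒰, SemiOpen T U) → A ⊆ ⋃₀ 𝒰 →
    ∃ 𝒱 ⊆ 𝒰, 𝒱.Finite ∧ A ⊆ ⋃ V ∈ 𝒱, closure V

/-- `A` is s-closed relative to `X`: every cover of `A` by semi-open sets of `X`
has a finite subfamily whose semi-closures cover `A`. -/
def SmallSClosedRel (T : TopologicalSpace X) (A : Set X) : Prop :=
  ∀ 𝒰 : Set (Set X), (∀ U ∈ 𝒰, SemiOpen T U) → A ⊆ ⋃₀ 𝒰 →
    ∃ 𝒱 ⊆ 𝒰, 𝒱.Finite ∧ A ⊆ ⋃ V ∈ 𝒱, sCl T V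

/-- Locally S-closed: every point has a neighbourhood which is S-closed relative to `X`. -/
def LocallySClosed (T : TopologicalSpace X) : Prop :=
  ∀ x : X, ∃ N ∈ @nhds X T x, SClosedRel T N

/-- Locally s-closed: every point has a neighbourhood which is s-closed relative to `X`. -/
def LocallySmallSClosed (T : TopologicalSpace X) : Prop :=
  ∀ x : X, ∃ N ∈ @nhds X T x, SmallSClosedRel T N

/-- para-S-closed: every semi-open cover has a locally finite refinement by
semi-open sets whose union is dense. -/
def ParaSClosed (T : TopologicalSpace X) : Prop :=
  letI := T
  ∀ 𝒰 : Set (Set X), (∀ U ∈ 𝒰, SemiOpen T U) → ⋃₀ 𝒰 = univ →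
    ∃ 𝒱 : Set (Set X), (∀ V ∈ 𝒱, SemiOpen T V) ∧ LocFinite T 𝒱 ∧ Refines 𝒱 𝒰 ∧
      closure (⋃₀ 𝒱) = univ

/-- para-rc-Lindelöf: every regular closed cover has a locally countable
refinement by regular closed sets. -/
def ParaRcLindelof (T : TopologicalSpace X) : Prop :=
  ∀ 𝒰 : Set (Set X), (∀ U ∈ 𝒰, RegClosed T U) → ⋃₀ 𝒰 = univ →
    ∃ 𝒱 : Set (Set X), (∀ V ∈ 𝒱, RegClosed T V) ∧ LocCountable T 𝒱 ∧ Refines 𝒱 𝒰 ∧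
      ⋃₀ 𝒱 = univ

/-- α-subparacompact: every α-open cover has a σ-discrete closed refinement covering `X`. -/
def AlphaSubparacompact (T : TopologicalSpace X) : Prop :=
  ∀ 𝒰 : Set (Set X), (∀ U ∈ 𝒰, AlphaOpen T U) → ⋃₀ 𝒰 = univ →
    ∃ 𝒱 : Set (Set X), (∀ V ∈ 𝒱, @IsClosed X T V) ∧ SigmaDiscrete T 𝒱 ∧ Refines 𝒱 𝒰 ∧
      ⋃₀ 𝒱 = univ

/-- gα-closed: `Cl_α A ⊆ U` whenever `A ⊆ U` with `U` α-open. -/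
def GAlphaClosed (T : TopologicalSpace X) (A : Set X) : Prop :=
  ∀ U : Set X, AlphaOpen T U → A ⊆ U → @closure X (alphaTop T) A ⊆ U

/-- α-paracompact: every α-open cover has a locally finite open refinement. -/
def AlphaParacompact (T : TopologicalSpace X) : Prop :=
  ∀ 𝒰 : Set (Set X), (∀ U ∈ 𝒰, AlphaOpen T U) → ⋃₀ 𝒰 = univ →
    ∃ 𝒱 : Set (Set X), (∀ V ∈ 𝒱, T.IsOpen V) ∧ LocFinite T 𝒱 ∧ Refines 𝒱 𝒰 ∧
      ⋃₀ 𝒱 = univ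

lemma isOpen_alphaTop {T : TopologicalSpace X} {A : Set X} :
    @IsOpen X (alphaTop T) A ↔
      A ⊆ @interior X T (@closure X T (@interior X T A)) := Iff.rfl

lemma isOpen_alpha_of_isOpen {T : TopologicalSpace X} {U : Set X}
    (hU : T.IsOpen U) : @IsOpen X (alphaTop T) U := by
  rw [isOpen_alphaTop]
  letI := T
  have hU' : IsOpen U := hU
  have h1 : interior U = U := hU'.interior_eq
  rw [h1]
  exact interior_maximal subset_closure hU

lemma closure_alpha_subset {T : TopologicalSpace X} (S : Set X) :
    @closure X (alphaTop T) S ⊆ @closure X T S := by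
  refine @closure_minimal X (alphaTop T) _ _ (@subset_closure X T S) ?_
  rw [← @isOpen_compl_iff]
  exact isOpen_alpha_of_isOpen (@isOpen_compl_iff X (@closure X T S) T |>.mpr
    (@isClosed_closure X T S))

lemma closure_alpha_of_isOpen {T : TopologicalSpace X} {U : Set X}
    (hU : T.IsOpen U) : @closure X (alphaTop T) U = @closure X T U := by
  refine subset_antisymm (closure_alpha_subset U) ?_
  intro x hx
  rw [@mem_closure_iff X (alphaTop T) x U]
  intro V hV hxV
  letI := T
  have hV' : V ⊆ interior (closure (interior V)) := hV
  have hxW : x ∈ interior (closure (interior V)) := hV' hxV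
  have h1 : (interior (closure (interior V)) ∩ U).Nonempty :=
    (@mem_closure_iff X T x U).1 hx _ isOpen_interior hxW
  obtain ⟨y, hyW, hyU⟩ := h1
  have hy : y ∈ closure (interior V) := interior_subset hyW
  have h2 : (U ∩ interior V).Nonempty :=
    (@mem_closure_iff X T y (interior V)).1 hy _ hU hyU
  obtain ⟨z, hzU, hzV⟩ := h2
  exact ⟨z, interior_subset hzV, hzU⟩

lemma interior_alpha_subset {T : TopologicalSpace X} (A : Set X) :
    @interior X (alphaTop T) A ⊆ @closure X T (@interior X T A) := by
  letI := T
  have hW : @IsOpen X (alphaTop T) (@interior X (alphaTop T) A) :=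
    @isOpen_interior X (alphaTop T) A
  have hWA : @interior X (alphaTop T) A ⊆ A := @interior_subset X (alphaTop T) A
  intro x hx
  have h1 : x ∈ interior (closure (interior (@interior X (alphaTop T) A))) :=
    (isOpen_alphaTop.1 hW) hx
  have h2 : interior (@interior X (alphaTop T) A) ⊆ interior A :=
    interior_mono hWA
  exact closure_mono h2 (interior_subset h1)

lemma semiOpen_alphaTop_iff {T : TopologicalSpace X} {A : Set X} :
    SemiOpen (alphaTop T) A ↔ SemiOpen T A := by
  letI := T
  constructor
  · intro h
    intro x hx
    have h1 : x ∈ @closure X (alphaTop T) (@interior X (alphaTop T) A) := h hx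
    have h2 : x ∈ @closure X T (@interior X (alphaTop T) A) :=
      closure_alpha_subset _ h1
    have h3 : @closure X T (@interior X (alphaTop T) A) ⊆
        closure (closure (interior A)) := closure_mono (interior_alpha_subset A)
    simpa using h3 h2
  · intro h
    intro x hx
    have h1 : interior A ⊆ @interior X (alphaTop T) A :=
      @interior_maximal X (alphaTop T) _ _ interior_subset
        (isOpen_alpha_of_isOpen isOpen_interior)
    have h2 : x ∈ @closure X (alphaTop T) (interior A) := by
      rw [closure_alpha_of_isOpen isOpen_interior]; exact h hx
    exact (@closure_mono X (alphaTop T) _ _ h1) h2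

lemma semiClosed_alphaTop_iff {T : TopologicalSpace X} {A : Set X} :
    SemiClosed (alphaTop T) A ↔ SemiClosed T A :=
  semiOpen_alphaTop_iff

lemma sCl_alphaTop (T : TopologicalSpace X) (A : Set X) :
    sCl (alphaTop T) A = sCl T A := by
  unfold sCl
  apply congrArg
  ext C
  simp [semiClosed_alphaTop_iff]

/-- `(X, 𝒯^α)` is s-closed iff `(X, 𝒯)` is s-closed. -/
theorem smallSClosed_alphaTop_iff (T : TopologicalSpace X) :
    SmallSClosed (alphaTop T) ↔ SmallSClosed T := by
  constructor
  · intro h 𝒰 h𝒰 hcov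
    obtain ⟨𝒱, h𝒱𝒰, hfin, hcov'⟩ :=
      h 𝒰 (fun U hU => semiOpen_alphaTop_iff.2 (h𝒰 U hU)) hcov
    refine ⟨𝒱, h𝒱𝒰, hfin, ?_⟩
    simpa [sCl_alphaTop] using hcov'
  · intro h 𝒰 h𝒰 hcov
    obtain ⟨𝒱, h𝒱𝒰, hfin, hcov'⟩ :=
      h 𝒰 (fun U hU => semiOpen_alphaTop_iff.1 (h𝒰 U hU)) hcov
    refine ⟨𝒱, h𝒱𝒰, hfin, ?_⟩
    simpa [sCl_alphaTop] using hcov'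
end

section
/- A topological space (X, 𝒯^α) is para-rc-Lindelöf if and only if (X, 𝒯) is para-rc-Lindelöf. -/
open Set TopologicalSpace

universe u v

variable {X : Type u} {Y : Type v}

section AuxAlpha

variable {T : TopologicalSpace X}

lemma alphaOpen_of_isOpen {U : Set X} (hU : T.IsOpen U) : (alphaTop T).IsOpen U := by
  letI := T
  have hU' : IsOpen U := hU
  show U ⊆ interior (closure (interior U))
  rw [hU'.interior_eq]
  exact interior_maximal subset_closure hU'

lemma alphaClosed_of_isClosed {C : Set X} (hC : @IsClosed X T C) :
    @IsClosed X (alphaTop T) C :=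
  @IsClosed.mk X (alphaTop T) C (alphaOpen_of_isOpen hC.isOpen_compl)

lemma closure_le_alphaClosure {W : Set X} (hW : @IsOpen X T W) :
    (letI := T; closure W) ⊆ @closure X (alphaTop T) W := by
  letI := T
  intro x hx
  rw [@mem_closure_iff X (alphaTop T) _ _]
  intro O hO hxO
  have hO' : O ⊆ interior (closure (interior O)) := hO
  obtain ⟨y, hy1, hy2⟩ :=
    mem_closure_iff.mp hx _ isOpen_interior (hO' hxO)
  have hy3 : y ∈ closure (interior O) := interior_subset hy1
  obtain ⟨z, hz1, hz2⟩ := mem_closure_iff.mp hy3 _ hW hy2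
  exact ⟨z, interior_subset hz2, hz1⟩

lemma alphaInterior_subset {A : Set X} :
    @interior X (alphaTop T) A ⊆ (letI := T; interior (closure (interior A))) := by
  letI := T
  have h1 : @IsOpen X (alphaTop T) (@interior X (alphaTop T) A) :=
    @isOpen_interior X (alphaTop T) A
  have h2 : @interior X (alphaTop T) A ⊆
      interior (closure (interior (@interior X (alphaTop T) A))) := h1
  intro x hx
  exact interior_mono (closure_mono (interior_mono (@interior_subset X (alphaTop T) A))) (h2 hx)

lemma interior_subset_alphaInterior {A : Set X} :
    (letI := T; interior A) ⊆ @interior X (alphaTop T) A := by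
  letI := T
  exact @interior_maximal X (alphaTop T) _ _ interior_subset
    (alphaOpen_of_isOpen isOpen_interior)

lemma alphaClosure_alphaInterior {A : Set X} :
    @closure X (alphaTop T) (@interior X (alphaTop T) A) =
      (letI := T; closure (interior A)) := by
  letI := T
  apply subset_antisymm
  · refine @closure_minimal X (alphaTop T) _ _ ?_ (alphaClosed_of_isClosed isClosed_closure)
    intro x hx
    exact interior_subset (alphaInterior_subset hx)
  · calc closure (interior A)
        ⊆ @closure X (alphaTop T) (interior A) := closure_le_alphaClosure isOpen_interior
      _ ⊆ @closure X (alphaTop T) (@interior X (alphaTop T) A) :=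
        @closure_mono X (alphaTop T) _ _ interior_subset_alphaInterior

lemma regClosed_alpha_iff {A : Set X} : RegClosed (alphaTop T) A ↔ RegClosed T A := by
  show (A = @closure X (alphaTop T) (@interior X (alphaTop T) A)) ↔
    (A = @closure X T (@interior X T A))
  rw [alphaClosure_alphaInterior]

lemma nhds_alpha_le {x : X} {N : Set X} (hN : N ∈ @nhds X T x) :
    N ∈ @nhds X (alphaTop T) x := by
  rw [@mem_nhds_iff X T _ _] at hN
  rw [@mem_nhds_iff X (alphaTop T) _ _]
  obtain ⟨U, hUN, hU, hxU⟩ := hN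
  exact ⟨U, hUN, alphaOpen_of_isOpen hU, hxU⟩

lemma locCountable_of_alpha {𝒱 : Set (Set X)} (h𝒱 : ∀ V ∈ 𝒱, RegClosed T V)
    (h : LocCountable (alphaTop T) 𝒱) : LocCountable T 𝒱 := by
  letI := T
  intro x
  obtain ⟨N, hN, hcount⟩ := h x
  rw [@mem_nhds_iff X (alphaTop T) _ _] at hN
  obtain ⟨A, hAN, hA, hxA⟩ := hN
  have hA' : A ⊆ interior (closure (interior A)) := hA
  refine ⟨interior (closure (interior A)),
    mem_nhds_iff.mpr ⟨_, Subset.rfl, isOpen_interior, hA' hxA⟩,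
    Set.Countable.mono ?_ hcount⟩
  rintro V ⟨hV𝒱, y, hyV, hyN'⟩
  refine ⟨hV𝒱, ?_⟩
  have hVr : V = closure (interior V) := h𝒱 V hV𝒱
  rw [hVr] at hyV
  obtain ⟨z, hz1, hz2⟩ := mem_closure_iff.mp hyV _ isOpen_interior hyN'
  have hz3 : z ∈ closure (interior A) := interior_subset hz1
  obtain ⟨w, hw1, hw2⟩ := mem_closure_iff.mp hz3 _ isOpen_interior hz2
  have hwV : w ∈ V := by rw [hVr]; exact subset_closure hw1
  exact ⟨w, hwV, hAN (interior_subset hw2)⟩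

end AuxAlpha

/-- `(X, 𝒯^α)` is para-rc-Lindelöf iff `(X, 𝒯)` is para-rc-Lindelöf. -/
theorem paraRcLindelof_alphaTop_iff (T : TopologicalSpace X) :
    ParaRcLindelof (alphaTop T) ↔ ParaRcLindelof T := by
  constructor
  · intro h 𝒰 h𝒰 hcov
    obtain ⟨𝒱, h1, h2, h3, h4⟩ :=
      h 𝒰 (fun U hU => (regClosed_alpha_iff (T := T)).mpr (h𝒰 U hU)) hcov
    have h1' : ∀ V ∈ 𝒱, RegClosed T V :=
      fun V hV => (regClosed_alpha_iff (T := T)).mp (h1 V hV)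
    exact ⟨𝒱, h1', locCountable_of_alpha h1' h2, h3, h4⟩
  · intro h 𝒰 h𝒰 hcov
    obtain ⟨𝒱, h1, h2, h3, h4⟩ :=
      h 𝒰 (fun U hU => (regClosed_alpha_iff (T := T)).mp (h𝒰 U hU)) hcov
    refine ⟨𝒱, fun V hV => (regClosed_alpha_iff (T := T)).mpr (h1 V hV), ?_, h3, h4⟩
    intro x
    obtain ⟨N, hN, hc⟩ := h2 x
    exact ⟨N, nhds_alpha_le hN, hc⟩
end
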